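/- If (X, ≤) is a well-quasi order, then the set of finite multisets over X is a well-quasi order under the relation: M₁ ⊑ M₂ iff there exists an injection h from M₁ into M₂ with m ≤ h(m) for every element m of M₁. -/

import Mathlib

/-- A well-quasi ordering: reflexive, transitive, and every infinite sequence
contains an increasing pair. -/
def IsWqo {X : Type*} (le : X → X → Prop) : Prop :=
  Reflexive le ∧ Transitive le ∧ ∀ f : ℕ → X, ∃ i j : ℕ, i < j ∧ le (f i) (f j)

/-- Multiset embedding: `M₁` embeds into `M₂` if there is a sub-multiset `N` of `M₂`
and a pairing (injection) of the elements of `M₁` with those of `N` that respects `le`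
pointwise. -/
def MultisetEmbeds {X : Type*} (le : X → X → Prop) (M₁ M₂ : Multiset X) : Prop :=
  ∃ N : Multiset X, N ≤ M₂ ∧ Multiset.Rel le M₁ N

private lemma forall₂_to_rel {X : Type*} {le : X → X → Prop} :
    ∀ {l₁ l₂ : List X}, List.Forall₂ le l₁ l₂ → Multiset.Rel le ↑l₁ ↑l₂ := by
  intro l₁ l₂ h
  induction h with
  | nil => exact Multiset.Rel.zero
  | cons h _ ih => exact Multiset.Rel.cons h ih

theorem multiset_wqo_of_wqo {X : Type*} (le : X → X → Prop) (hwqo : IsWqo le) :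
    IsWqo (MultisetEmbeds le) := by
  obtain ⟨hrefl, htrans, hseq⟩ := hwqo
  haveI : IsRefl X le := ⟨hrefl⟩
  haveI : IsTrans X le := ⟨fun _ _ _ h1 h2 => htrans h1 h2⟩
  refine ⟨fun M => ⟨M, le_rfl, Multiset.rel_refl_of_refl_on fun x _ => hrefl x⟩, ?_, ?_⟩
  · rintro M₁ M₂ M₃ ⟨N₂, hN₂, hR₂⟩ ⟨N₃, hN₃, hR₃⟩
    obtain ⟨D, rfl⟩ := Multiset.le_iff_exists_add.1 hN₂
    rw [Multiset.rel_add_left] at hR₃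
    obtain ⟨K₁, K₂, hK, _, rfl⟩ := hR₃
    exact ⟨K₁, le_trans (Multiset.le_add_right _ _) hN₃, Multiset.Rel.trans le hR₂ hK⟩
  · intro f
    have hpwo : (Set.univ : Set X).PartiallyWellOrderedOn le :=
      Set.partiallyWellOrderedOn_iff_exists_lt.2 fun g _ => hseq g
    haveI : IsPreorder X le := {}
    have H := Set.partiallyWellOrderedOn_iff_exists_lt.1 (hpwo.partiallyWellOrderedOn_sublistForall₂ le)
    obtain ⟨i, j, hij, hle⟩ := H (fun n => (f n).toList) (fun n x _ => Set.mem_univ x)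
    obtain ⟨l, hf, hsub⟩ := List.sublistForall₂_iff.1 hle
    refine ⟨i, j, hij, ⟨↑l, ?_, ?_⟩⟩
    · calc (↑l : Multiset X) ≤ ↑(f j).toList := hsub.subperm
        _ = f j := (f j).coe_toList
    · have := forall₂_to_rel hf
      rwa [(f i).coe_toList] at this
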